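/- Let G be a graph, and let each vertex v be given two disjoint color sets L'(v) and R(v). Let φ be an edge coloring of G such that every color class has maximum degree at most 2 and such that φ(e) ∈ L'(u) ∩ L'(v) for each edge e = uv. Let H be a subgraph of G that contains at least one edge from every monochromatic cycle of φ, and let φ' be a proper edge coloring of H with φ'(e) ∈ R(u) ∩ R(v) for each edge e = uv of H. Define ψ on E(G) by ψ(e) = φ'(e) if e ∈ E(H) and ψ(e) = φ(e) otherwise. Then every color class of ψ induces a linear forest (i.e., ψ has no monochromatic cycle and every color class has maximum degree at most 2). -/

import Mathlib

open SimpleGraph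

lemma cycle_second_edge {V : Type*} {G : SimpleGraph V} {a v : V} (W : G.Walk a a)
    (hW : W.IsCycle) (e0 : Sym2 V) (he0 : e0 ∈ W.edges) (hv : v ∈ e0) :
    ∃ e1 ∈ W.edges, e1 ≠ e0 ∧ v ∈ e1 := by
  classical
  have hvs : v ∈ W.support := by
    induction e0 with
    | _ x y =>
      rcases Sym2.mem_iff.mp hv with rfl | rfl
      · exact W.fst_mem_support_of_mem_edges he0
      · exact W.snd_mem_support_of_mem_edges he0
  have hcyc' : (W.rotate v hvs).IsCycle := hW.rotate hvs
  have hedges : ∀ e, e ∈ (W.rotate v hvs).edges ↔ e ∈ W.edges := fun e =>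
    (W.rotate_edges v hvs).mem_iff
  suffices h : ∃ e1 ∈ (W.rotate v hvs).edges, ∃ e2 ∈ (W.rotate v hvs).edges,
      e1 ≠ e2 ∧ v ∈ e1 ∧ v ∈ e2 by
    obtain ⟨e1, h1, e2, h2, hne, hv1, hv2⟩ := h
    by_cases he : e1 = e0
    · exact ⟨e2, (hedges e2).mp h2, by rw [← he]; exact hne.symm, hv2⟩
    · exact ⟨e1, (hedges e1).mp h1, he, hv1⟩
  generalize (W.rotate v hvs) = W' at hcyc' ⊢
  clear hedges he0 hv hW hvs
  cases W' with
  | nil => exact absurd rfl hcyc'.ne_nil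
  | cons h p =>
    rename_i b
    have hnodup : (Walk.cons h p).edges.Nodup := hcyc'.edges_nodup
    have hpr : ¬ p.reverse.Nil := Walk.not_nil_of_ne h.ne
    obtain ⟨d, hadj, q, hq⟩ := Walk.not_nil_iff.mp hpr
    have he2 : s(v, d) ∈ p.edges := by
      have : s(v, d) ∈ p.reverse.edges := by rw [hq]; simp
      rwa [Walk.edges_reverse, List.mem_reverse] at this
    refine ⟨s(v, b), by simp, s(v, d), by simp [he2], ?_, by simp, by simp⟩
    intro heq
    rw [Walk.edges_cons, List.nodup_cons] at hnodup
    exact hnodup.1 (heq ▸ he2)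

/-- Combining a degree-2 coloring `φ` (colored from lists `L'`) with a proper coloring
`φ'` of a subgraph `H` hitting all monochromatic cycles (colored from lists `R`, with
`L'(v)` and `R(v)` disjoint at every vertex) yields a coloring `ψ` whose color classes
are all linear forests. -/
theorem combine_colorings_linear {V : Type*} [Fintype V] (G H : SimpleGraph V)
    (L' R : V → Set ℕ) (φ φ' ψ : Sym2 V → ℕ)
    (hdisj : ∀ v : V, Disjoint (L' v) (R v))
    (hφdeg : ∀ (v : V) (c : ℕ), ({e | e ∈ G.edgeSet ∧ v ∈ e ∧ φ e = c}).ncard ≤ 2)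
    (hφlist : ∀ e ∈ G.edgeSet, ∀ v ∈ e, φ e ∈ L' v)
    (hHG : H ≤ G)
    (hhit : ∀ (a : V) (W : G.Walk a a), W.IsCycle → (∃ c, ∀ e ∈ W.edges, φ e = c) →
      ∃ e ∈ W.edges, e ∈ H.edgeSet)
    (hφ'proper : ∀ e ∈ H.edgeSet, ∀ f ∈ H.edgeSet, e ≠ f →
      (∃ v : V, v ∈ e ∧ v ∈ f) → φ' e ≠ φ' f)
    (hφ'list : ∀ e ∈ H.edgeSet, ∀ v ∈ e, φ' e ∈ R v)
    (hψH : ∀ e ∈ H.edgeSet, ψ e = φ' e)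
    (hψG : ∀ e ∈ G.edgeSet, e ∉ H.edgeSet → ψ e = φ e) :
    (∀ (a : V) (W : G.Walk a a), W.IsCycle → ¬ ∃ c, ∀ e ∈ W.edges, ψ e = c) ∧
      (∀ (v : V) (c : ℕ), ({e | e ∈ G.edgeSet ∧ v ∈ e ∧ ψ e = c}).ncard ≤ 2) := by
  classical
  constructor
  · rintro a W hcyc ⟨c, hc⟩
    by_cases hH : ∃ e ∈ W.edges, e ∈ H.edgeSet
    · obtain ⟨e0, he0W, he0H⟩ := hH
      obtain ⟨⟨x, y⟩, rfl⟩ := e0.exists_rep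
      have hcR : c ∈ R x := by
        rw [← hc _ he0W, hψH _ he0H]
        exact hφ'list _ he0H x (Sym2.mem_mk_left x y)
      obtain ⟨e1, he1W, hne, hxe1⟩ :=
        cycle_second_edge W hcyc s(x, y) he0W (Sym2.mem_mk_left x y)
      have he1G : e1 ∈ G.edgeSet := W.edges_subset_edgeSet he1W
      by_cases he1H : e1 ∈ H.edgeSet
      · exact hφ'proper e1 he1H _ he0H hne ⟨x, hxe1, Sym2.mem_mk_left x y⟩
          (by rw [← hψH _ he1H, ← hψH _ he0H, hc _ he1W, hc _ he0W])
      · have hcL : c ∈ L' x := by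
          rw [← hc _ he1W, hψG _ he1G he1H]
          exact hφlist _ he1G x hxe1
        exact (hdisj x).ne_of_mem hcL hcR rfl
    · push_neg at hH
      refine absurd (hhit a W hcyc ⟨c, fun e he => ?_⟩) (by push_neg; exact hH)
      rw [← hψG _ (W.edges_subset_edgeSet he) (hH e he)]
      exact hc e he
  · intro v c
    by_cases hH : ∃ e, (e ∈ G.edgeSet ∧ v ∈ e ∧ ψ e = c) ∧ e ∈ H.edgeSet
    · obtain ⟨e0, ⟨he0G, hve0, hψe0⟩, he0H⟩ := hH
      have hcR : c ∈ R v := by rw [← hψe0, hψH _ he0H]; exact hφ'list _ he0H v hve0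
      have hsub : {e | e ∈ G.edgeSet ∧ v ∈ e ∧ ψ e = c} ⊆ {e0} := by
        rintro e ⟨heG, hve, hψe⟩
        have heH : e ∈ H.edgeSet := by
          by_contra heH
          have : c ∈ L' v := by rw [← hψe, hψG _ heG heH]; exact hφlist _ heG v hve
          exact (hdisj v).ne_of_mem this hcR rfl
        by_contra hne
        exact hφ'proper e heH e0 he0H hne ⟨v, hve, hve0⟩
          (by rw [← hψH _ heH, ← hψH _ he0H, hψe, hψe0])
      calc ({e | e ∈ G.edgeSet ∧ v ∈ e ∧ ψ e = c}).ncard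
          ≤ ({e0} : Set (Sym2 V)).ncard := Set.ncard_le_ncard hsub (Set.finite_singleton e0)
        _ ≤ 2 := by rw [Set.ncard_singleton]; omega
    · push_neg at hH
      have hsub : {e | e ∈ G.edgeSet ∧ v ∈ e ∧ ψ e = c} ⊆
          {e | e ∈ G.edgeSet ∧ v ∈ e ∧ φ e = c} := by
        rintro e ⟨heG, hve, hψe⟩
        exact ⟨heG, hve, by rw [← hψG _ heG (hH e ⟨heG, hve, hψe⟩)]; exact hψe⟩
      exact le_trans (Set.ncard_le_ncard hsub (Set.toFinite _)) (hφdeg v c)
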